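/- Let φ_μ be ρ-weakly convex and differentiable on its domain intersected with dom r (φ_μ = f_μ + r, f_μ smooth, r convex). If x* ∈ dom φ_μ satisfies ‖∇e_λ φ_μ(x*)‖ ≤ ε with λ < ρ^{-1}, then x* is a (λε, ε)-Goldstein stationary point of φ_μ, i.e., min{‖g‖ : g ∈ ∂̄_{λε} φ_μ(x*)} ≤ ε. -/

import Mathlib

open Filter Metric
open scoped Topology NNReal

variable {n : ℕ}

/-- Clarke generalized directional derivative of `f` at `x` in direction `v`. -/
noncomputable def clarkeDeriv (f : EuclideanSpace ℝ (Fin n) → ℝ)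
    (x v : EuclideanSpace ℝ (Fin n)) : ℝ :=
  limsup (fun p : EuclideanSpace ℝ (Fin n) × ℝ => (f (p.1 + p.2 • v) - f p.1) / p.2)
    ((𝓝 x) ×ˢ (𝓝[>] (0 : ℝ)))

/-- Clarke subdifferential of `f` at `x`. -/
def clarkeSubdiff (f : EuclideanSpace ℝ (Fin n) → ℝ) (x : EuclideanSpace ℝ (Fin n)) :
    Set (EuclideanSpace ℝ (Fin n)) :=
  {g | ∀ v, (inner ℝ g v : ℝ) ≤ clarkeDeriv f x v}

/-- The `δ`-Goldstein subdifferential `∂̄_δ f(x) = conv(⋃_{y ∈ B̄_δ(x)} ∂̄f(y))`. -/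
def goldsteinSubdiff (δ : ℝ) (f : EuclideanSpace ℝ (Fin n) → ℝ)
    (x : EuclideanSpace ℝ (Fin n)) : Set (EuclideanSpace ℝ (Fin n)) :=
  convexHull ℝ (⋃ y ∈ closedBall x δ, clarkeSubdiff f y)

/-- Moreau envelope of `φ` with parameter `λ`. -/
noncomputable def moreauEnv (φ : EuclideanSpace ℝ (Fin n) → ℝ) (lam : ℝ)
    (x : EuclideanSpace ℝ (Fin n)) : ℝ :=
  ⨅ w, (φ w + (1 / (2 * lam)) * ‖w - x‖ ^ 2)

open scoped RealInnerProductSpace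

set_option linter.unusedVariables false

local notation "E" => EuclideanSpace ℝ (Fin n)

lemma inner_gradient_eq (f : E → ℝ) (z d : E) :
    ⟪gradient f z, d⟫ = fderiv ℝ f z d := by
  rw [gradient, ← InnerProductSpace.toDual_apply_apply, (InnerProductSpace.toDual ℝ _).apply_symm_apply]

lemma line_hasDerivAt (a d : E) (t : ℝ) :
    HasDerivAt (fun s : ℝ => a + s • d) d t := by
  simpa using ((hasDerivAt_id t).smul_const d).const_add a

lemma comp_line_hasDerivAt {f : E → ℝ} (hf : Differentiable ℝ f) (a d : E) (t : ℝ) :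
    HasDerivAt (fun s : ℝ => f (a + s • d)) ⟪gradient f (a + t • d), d⟫ t := by
  rw [inner_gradient_eq]
  exact (hf _).hasFDerivAt.comp_hasDerivAt t (line_hasDerivAt a d t)

lemma descent_lower {ρ : ℝ≥0} {f : E → ℝ} (hf : Differentiable ℝ f)
    (hg : LipschitzWith ρ (gradient f)) (a b : E) :
    f a + ⟪gradient f a, b - a⟫ - (ρ/2) * ‖b - a‖^2 ≤ f b := by
  set d := b - a with hd
  set c : ℝ := ⟪gradient f a, d⟫ with hc
  set G : ℝ → ℝ := fun t => f (a + t • d) - t * c + (ρ/2) * ‖d‖^2 * t^2 with hG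
  have hG' : ∀ t : ℝ, HasDerivAt G (⟪gradient f (a + t • d), d⟫ - c + (ρ/2) * ‖d‖^2 * (2*t)) t := by
    intro t
    have h1 : HasDerivAt (fun s : ℝ => s * c) c t := by
      simpa using (hasDerivAt_id t).mul_const c
    have h2 : HasDerivAt (fun s : ℝ => (ρ:ℝ)/2 * ‖d‖^2 * s^2) ((ρ:ℝ)/2 * ‖d‖^2 * (2*t)) t := by
      simpa [mul_comm, mul_assoc] using (hasDerivAt_pow 2 t).const_mul ((ρ:ℝ)/2 * ‖d‖^2)
    exact ((comp_line_hasDerivAt hf a d t).sub h1).add h2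
  have key : G 0 ≤ G 1 := by
    apply monotoneOn_of_deriv_nonneg (convex_Icc (0:ℝ) 1)
      (fun t _ => ((hG' t).continuousAt).continuousWithinAt)
      (fun t _ => ((hG' t).differentiableAt).differentiableWithinAt)
      (fun t ht => ?_) (Set.left_mem_Icc.2 zero_le_one) (Set.right_mem_Icc.2 zero_le_one) zero_le_one
    rw [(hG' t).deriv]
    rw [interior_Icc] at ht
    have hip : ⟪gradient f (a + t • d) - gradient f a, d⟫ ≥ -(‖gradient f (a + t • d) - gradient f a‖ * ‖d‖) := by
      have := abs_real_inner_le_norm (gradient f (a + t • d) - gradient f a) d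
      have := neg_abs_le ⟪gradient f (a + t • d) - gradient f a, d⟫
      linarith
    have hlip : ‖gradient f (a + t • d) - gradient f a‖ ≤ (ρ:ℝ) * (t * ‖d‖) := by
      have := hg.dist_le_mul (a + t • d) a
      rw [dist_eq_norm, dist_eq_norm] at this
      simpa [norm_smul, abs_of_pos ht.1, mul_assoc] using this
    have hsub : ⟪gradient f (a + t • d) - gradient f a, d⟫ = ⟪gradient f (a + t • d), d⟫ - c := by
      rw [hc, inner_sub_left]
    have hd0 : (0:ℝ) ≤ ‖d‖ := norm_nonneg d
    nlinarith [mul_le_mul_of_nonneg_right hlip hd0, ht.1.le]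
  have e0 : G 0 = f a := by simp [hG]
  have hab : a + d = b := by rw [hd]; abel
  have e1 : G 1 = f b - c + (ρ:ℝ)/2 * ‖d‖^2 := by simp [hG, hab]
  rw [e0, e1] at key
  simp only [hc, hd] at key ⊢
  linarith

lemma convex_continuous {r : E → ℝ} (hr : ConvexOn ℝ Set.univ r) : Continuous r :=
  hr.locallyLipschitz.continuous

lemma convex_lower_bound {r : E → ℝ} (hr : ConvexOn ℝ Set.univ r) (x : E) :
    ∃ B : ℝ, 0 ≤ B ∧ ∀ w, r x - B * (1 + ‖w - x‖) ≤ r w := by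
  obtain ⟨z₀, hz₀ball, hz₀⟩ := (isCompact_closedBall x 1).exists_isMinOn
    ⟨x, mem_closedBall_self zero_le_one⟩ ((convex_continuous hr).continuousOn)
  refine ⟨|r x - r z₀|, abs_nonneg _, fun w => ?_⟩
  have hmin : ∀ z ∈ closedBall x 1, r z₀ ≤ r z := fun z hz => hz₀ hz
  rcases le_or_gt ‖w - x‖ 1 with hs | hs
  · have h1 : r z₀ ≤ r w := hmin w (by rwa [mem_closedBall, dist_eq_norm])
    have h2 : r x - r z₀ ≤ |r x - r z₀| := le_abs_self _
    nlinarith [abs_nonneg (r x - r z₀), norm_nonneg (w - x)]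
  · set s : ℝ := ‖w - x‖ with hsdef
    have hs0 : 0 < s := lt_trans zero_lt_one hs
    set z : E := x + s⁻¹ • (w - x) with hz
    have hzball : z ∈ closedBall x 1 := by
      rw [mem_closedBall, dist_eq_norm]
      have : z - x = s⁻¹ • (w - x) := by rw [hz]; abel
      rw [this, norm_smul, Real.norm_eq_abs, abs_inv, abs_of_pos hs0, ← hsdef]
      rw [inv_mul_cancel₀ hs0.ne']
    have hzconv : z = (1 - s⁻¹) • x + s⁻¹ • w := by
      rw [hz, sub_smul, one_smul, smul_sub]; abel
    have hinv1 : s⁻¹ ≤ 1 := by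
      rw [inv_le_one_iff₀]; right; exact hs.le
    have hinv0 : 0 < s⁻¹ := inv_pos.2 hs0
    have hconv := hr.2 (Set.mem_univ x) (Set.mem_univ w)
      (by linarith : (0:ℝ) ≤ 1 - s⁻¹) hinv0.le (by ring)
    rw [← hzconv] at hconv
    have hz0 : r z₀ ≤ r z := hmin z hzball
    -- r w ≥ (r z - (1 - s⁻¹) r x) * s
    have habs : r x - r z₀ ≤ |r x - r z₀| := le_abs_self _
    have habs' : 0 ≤ |r x - r z₀| := abs_nonneg _
    -- from hconv : r z ≤ (1 - s⁻¹) * r x + s⁻¹ * r w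
    -- so r w ≥ s * r z - (s-1) * r x ≥ s * r z₀ - (s-1) * r x
    --        = r x + s * (r z₀ - r x) ≥ r x - s * |r x - r z₀|
    have h5 : s⁻¹ * s = 1 := inv_mul_cancel₀ hs0.ne'
    simp only [smul_eq_mul] at hconv
    have h6 := mul_le_mul_of_nonneg_left hconv hs0.le
    have h7 : s * ((1 - s⁻¹) * r x + s⁻¹ * r w) = (s - 1) * r x + r w := by
      field_simp
    rw [h7] at h6
    nlinarith [mul_le_mul_of_nonneg_left habs hs0.le]

lemma prox_exists {ρ : ℝ≥0} {f r : E → ℝ} (hf : Differentiable ℝ f)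
    (hg : LipschitzWith ρ (gradient f)) (hr : ConvexOn ℝ Set.univ r)
    {κ : ℝ} (hκ : (ρ:ℝ)/2 < κ) (y : E) :
    ∃ p, ∀ w, f p + r p + κ * ‖p - y‖^2 ≤ f w + r w + κ * ‖w - y‖^2 := by
  obtain ⟨B, hB0, hB⟩ := convex_lower_bound hr y
  set ψ : E → ℝ := fun w => f w + r w + κ * ‖w - y‖^2 with hψ
  set C : ℝ := ‖gradient f y‖ + B with hC
  set K : ℝ := f y + r y - B with hK
  set a : ℝ := κ - (ρ:ℝ)/2 with ha
  have ha0 : 0 < a := by simp [ha]; linarith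
  have hlow : ∀ w, K + a * ‖w - y‖^2 - C * ‖w - y‖ ≤ ψ w := by
    intro w
    have h1 := descent_lower hf hg y w
    have h2 := hB w
    have h3 : -(‖gradient f y‖ * ‖w - y‖) ≤ ⟪gradient f y, w - y⟫ := by
      have := abs_real_inner_le_norm (gradient f y) (w - y)
      have := neg_abs_le ⟪gradient f y, w - y⟫
      linarith
    simp only [hψ, hC, hK, ha]
    nlinarith [norm_nonneg (w - y)]
  set R : ℝ := max ((C + 1)/a) (|f y + r y - K| + 1) with hR
  have hR0 : 0 ≤ R := le_trans (by positivity) (le_max_of_le_right (le_refl _))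
  have hψc : Continuous ψ := by
    refine ((hf.continuous.add (convex_continuous hr)).add ?_)
    exact continuous_const.mul (((continuous_id.sub continuous_const).norm).pow 2)
  obtain ⟨p, hpball, hpmin⟩ := (isCompact_closedBall y R).exists_isMinOn
    ⟨y, mem_closedBall_self hR0⟩ hψc.continuousOn
  refine ⟨p, fun w => ?_⟩
  show ψ p ≤ ψ w
  rcases le_or_gt ‖w - y‖ R with hw | hw
  · exact hpmin (by rwa [mem_closedBall, dist_eq_norm])
  · have hyball : ψ p ≤ ψ y := hpmin (mem_closedBall_self hR0)
    have h1 : (C + 1)/a ≤ ‖w - y‖ := le_trans (le_max_left _ _) hw.le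
    have h2 : |f y + r y - K| + 1 ≤ ‖w - y‖ := le_trans (le_max_right _ _) hw.le
    have h3 : C + 1 ≤ a * ‖w - y‖ := by
      rw [div_le_iff₀ ha0] at h1; linarith [h1]
    have h4 : K + ‖w - y‖ ≤ K + a * ‖w - y‖^2 - C * ‖w - y‖ := by
      nlinarith [norm_nonneg (w - y), hR0, lt_of_le_of_lt hR0 hw]
    have h5 : ψ y ≤ K + ‖w - y‖ := by
      have : ψ y = f y + r y := by simp [hψ]
      rw [this]
      have := le_abs_self (f y + r y - K)
      linarith
    linarith [hlow w, hyball]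

lemma prox_growth {ρ : ℝ≥0} {f r : E → ℝ} (hf : Differentiable ℝ f)
    (hg : LipschitzWith ρ (gradient f)) (hr : ConvexOn ℝ Set.univ r)
    {κ : ℝ} (y p : E)
    (hp : ∀ w, f p + r p + κ * ‖p - y‖^2 ≤ f w + r w + κ * ‖w - y‖^2) (w : E) :
    f p + r p + κ * ‖p - y‖^2 + ((2*κ - ρ)/4) * ‖w - p‖^2
      ≤ f w + r w + κ * ‖w - y‖^2 := by
  set m : E := (1/2 : ℝ) • (w + p) with hm
  have hwm : w - m = (1/2 : ℝ) • (w - p) := by rw [hm]; module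
  have hpm : p - m = -((1/2 : ℝ) • (w - p)) := by rw [hm]; module
  have hmy : m - y = (1/2 : ℝ) • ((w - y) + (p - y)) := by rw [hm]; module
  have hn : ∀ u : E, ‖(1/2 : ℝ) • u‖^2 = (1/4) * ‖u‖^2 := by
    intro u; rw [norm_smul, Real.norm_eq_abs]
    rw [abs_of_pos (by norm_num : (0:ℝ) < 1/2)]; ring
  have h1 := descent_lower hf hg m w
  have h2 := descent_lower hf hg m p
  rw [hwm] at h1
  rw [hpm] at h2
  rw [real_inner_smul_right] at h1
  rw [inner_neg_right, real_inner_smul_right, norm_neg] at h2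
  rw [hn] at h1 h2
  have hr2 : r m ≤ (1/2) * r w + (1/2) * r p := by
    have := hr.2 (Set.mem_univ w) (Set.mem_univ p) (by norm_num : (0:ℝ) ≤ 1/2)
      (by norm_num : (0:ℝ) ≤ 1/2) (by norm_num : (1/2:ℝ) + 1/2 = 1)
    simpa [hm, smul_add, smul_eq_mul] using this
  have e2 : w - p = (w - y) - (p - y) := by abel
  have hq : ‖m - y‖^2 = (‖w - y‖^2 + ‖p - y‖^2)/2 - ‖w - p‖^2/4 := by
    rw [hmy, hn, e2]
    have e1 := norm_add_sq_real (w - y) (p - y)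
    have e3 := norm_sub_sq_real (w - y) (p - y)
    linarith
  have hqκ : κ * ‖m - y‖^2 = κ*((‖w - y‖^2 + ‖p - y‖^2)/2) - κ*(‖w - p‖^2/4) := by
    rw [hq]; ring
  have hpmin := hp m
  nlinarith [h1, h2, hr2, hqκ, hpmin]

lemma prox_lip {ρ : ℝ≥0} {f r : E → ℝ} (hf : Differentiable ℝ f)
    (hg : LipschitzWith ρ (gradient f)) (hr : ConvexOn ℝ Set.univ r)
    {κ : ℝ} (hκ : (ρ:ℝ)/2 < κ) (x y px py : E)
    (hpx : ∀ w, f px + r px + κ * ‖px - x‖^2 ≤ f w + r w + κ * ‖w - x‖^2)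
    (hpy : ∀ w, f py + r py + κ * ‖py - y‖^2 ≤ f w + r w + κ * ‖w - y‖^2) :
    ((2*κ - ρ)/4) * ‖py - px‖ ≤ κ * ‖y - x‖ := by
  have hκ0 : (0:ℝ) ≤ κ := le_trans (by positivity) hκ.le
  have hγ : (0:ℝ) < (2*κ - ρ)/4 := by
    have : (0:ℝ) ≤ (ρ:ℝ) := (ρ:ℝ≥0).coe_nonneg
    linarith
  have g1 := prox_growth hf hg hr x px hpx py
  have g2 := prox_growth hf hg hr y py hpy px
  rw [show ‖px - py‖ = ‖py - px‖ from norm_sub_rev _ _] at g2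
  have E1 : κ*‖py - x‖^2 = κ*(‖py‖^2 - 2*⟪py,x⟫ + ‖x‖^2) := by
    rw [norm_sub_sq_real]
  have E2 : κ*‖px - x‖^2 = κ*(‖px‖^2 - 2*⟪px,x⟫ + ‖x‖^2) := by
    rw [norm_sub_sq_real]
  have E3 : κ*‖px - y‖^2 = κ*(‖px‖^2 - 2*⟪px,y⟫ + ‖y‖^2) := by
    rw [norm_sub_sq_real]
  have E4 : κ*‖py - y‖^2 = κ*(‖py‖^2 - 2*⟪py,y⟫ + ‖y‖^2) := by
    rw [norm_sub_sq_real]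
  have hinner : ⟪py - px, y - x⟫ = ⟪py,y⟫ - ⟪py,x⟫ - ⟪px,y⟫ + ⟪px,x⟫ := by
    rw [inner_sub_left, inner_sub_right, inner_sub_right]; ring
  have hCS : ⟪py - px, y - x⟫ ≤ ‖py - px‖ * ‖y - x‖ := real_inner_le_norm _ _
  have hCSκ := mul_le_mul_of_nonneg_left hCS hκ0
  have hinnerκ : κ * ⟪py - px, y - x⟫
      = κ*⟪py,y⟫ - κ*⟪py,x⟫ - κ*⟪px,y⟫ + κ*⟪px,x⟫ := by rw [hinner]; ring
  set d : ℝ := ‖py - px‖ with hd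
  have hd0 : (0:ℝ) ≤ d := norm_nonneg _
  have step1 : ((2*κ - ρ)/4) * d^2 ≤ κ * (d * ‖y - x‖) := by nlinarith
  rcases eq_or_lt_of_le hd0 with h0 | h0
  · rw [← h0, mul_zero]; positivity
  · nlinarith

set_option maxHeartbeats 1000000 in
lemma mem_clarke {ρ : ℝ≥0} {f r : E → ℝ} (hf : Differentiable ℝ f)
    (hg : LipschitzWith ρ (gradient f)) (hr : ConvexOn ℝ Set.univ r)
    {κ : ℝ} (hκ0 : 0 < κ) (x p : E)
    (hp : ∀ w, f p + r p + κ * ‖p - x‖^2 ≤ f w + r w + κ * ‖w - x‖^2)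
    {g : E} (hgdef : g = (2*κ) • (x - p)) :
    g ∈ clarkeSubdiff (fun y => f y + r y) p := by
  intro v
  set φ : E → ℝ := fun y => f y + r y with hφ
  set u : E × ℝ → ℝ := fun z => (φ (z.1 + z.2 • v) - φ z.1) / z.2 with hu
  set F : Filter (E × ℝ) := (𝓝 p) ×ˢ (𝓝[>] (0:ℝ)) with hF
  have hrc : Continuous r := convex_continuous hr
  -- lower bound on the difference quotient at y = p
  have hquot : ∀ t : ℝ, 0 < t → ⟪g, v⟫ - κ*t*‖v‖^2 ≤ u (p, t) := by
    intro t ht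
    have hmin := hp (p + t • v)
    have hexp : ‖p + t • v - x‖^2 = ‖p - x‖^2 + 2*(t*⟪p - x, v⟫) + t^2*‖v‖^2 := by
      have h1 : p + t • v - x = (p - x) + t • v := by abel
      rw [h1, norm_add_sq_real, real_inner_smul_right, norm_smul, Real.norm_eq_abs,
        mul_pow, sq_abs]
    have hgv : ⟪g, v⟫ = -(2*κ*⟪p - x, v⟫) := by
      rw [hgdef, real_inner_smul_left, show x - p = -(p - x) by abel, inner_neg_left]
      ring
    have hdiff : t * ⟪g, v⟫ - κ*t^2*‖v‖^2 ≤ φ (p + t • v) - φ p := by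
      simp only [hφ] at hmin ⊢
      nlinarith [hmin, hexp]
    show ⟪g, v⟫ - κ*t*‖v‖^2 ≤ (φ (p + t • v) - φ p) / t
    rw [le_div_iff₀ ht]
    nlinarith [hdiff]
  -- upper bound for quotients near p
  have hbdd : F.IsBoundedUnder (· ≤ ·) u := by
    obtain ⟨zM, _, hzM⟩ := (isCompact_closedBall p (1+‖v‖)).exists_isMaxOn
      ⟨p, mem_closedBall_self (by positivity)⟩ hrc.continuousOn
    obtain ⟨zm, _, hzm⟩ := (isCompact_closedBall p (1+‖v‖)).exists_isMinOn
      ⟨p, mem_closedBall_self (by positivity)⟩ hrc.continuousOn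
    set C1 : ℝ := (‖gradient f p‖ + (ρ:ℝ)*(1+2*‖v‖))*‖v‖ with hC1
    set Cb : ℝ := C1 + (ρ:ℝ)/2*‖v‖^2 + (r zM - r zm) with hCb
    apply isBoundedUnder_of_eventually_le (a := Cb)
    have hev : (closedBall p 1) ×ˢ (Set.Ioc (0:ℝ) 1) ∈ F :=
      prod_mem_prod (closedBall_mem_nhds p one_pos) (Ioc_mem_nhdsGT one_pos)
    filter_upwards [hev]
    rintro ⟨y, t⟩ ⟨hy, ht⟩
    simp only [Set.mem_Ioc] at ht
    rw [mem_closedBall, dist_eq_norm] at hy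
    simp only at hy
    obtain ⟨ht0, ht1⟩ := ht
    -- f part
    have hdes := descent_lower hf hg (y + t • v) y
    have hsub : y - (y + t • v) = -(t • v) := by abel
    rw [hsub, inner_neg_right, real_inner_smul_right, norm_neg, norm_smul,
      Real.norm_eq_abs, abs_of_pos ht0] at hdes
    have hgb : ‖gradient f (y + t • v)‖ ≤ ‖gradient f p‖ + (ρ:ℝ)*(1+2*‖v‖) := by
      have hl := hg.dist_le_mul (y + t • v) p
      rw [dist_eq_norm, dist_eq_norm] at hl
      have h2 : ‖y + t • v - p‖ ≤ 1 + 2*‖v‖ := by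
        rw [show y + t • v - p = (y - p) + t • v by abel]
        calc ‖(y - p) + t • v‖ ≤ ‖y - p‖ + ‖t • v‖ := norm_add_le _ _
          _ ≤ 1 + 2*‖v‖ := by
            rw [norm_smul, Real.norm_eq_abs, abs_of_pos ht0]
            nlinarith [norm_nonneg v, norm_nonneg (y - p)]
      have h3 := norm_le_norm_add_norm_sub' (gradient f (y + t • v)) (gradient f p)
      nlinarith [hl, h2, h3, (ρ:ℝ≥0).coe_nonneg]
    have hinner : ⟪gradient f (y + t • v), v⟫ ≤ C1 := by
      rw [hC1]
      calc ⟪gradient f (y + t • v), v⟫ ≤ ‖gradient f (y + t • v)‖*‖v‖ := real_inner_le_norm _ _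
        _ ≤ _ := by nlinarith [norm_nonneg v]
    -- r part
    have hpt : (1-t) • y + t • (y + v) = y + t • v := by module
    have hrconv : r (y + t • v) ≤ (1-t) * r y + t * r (y + v) := by
      have h := hr.2 (Set.mem_univ y) (Set.mem_univ (y + v)) (by linarith : (0:ℝ) ≤ 1 - t)
        ht0.le (by ring)
      rw [hpt] at h
      simpa [smul_eq_mul] using h
    have hyM : r (y + v) ≤ r zM := hzM (by
      rw [mem_closedBall, dist_eq_norm]
      calc ‖y + v - p‖ = ‖(y - p) + v‖ := by rw [show y + v - p = (y - p) + v by abel]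
        _ ≤ ‖y - p‖ + ‖v‖ := norm_add_le _ _
        _ ≤ 1 + ‖v‖ := by linarith)
    have hym : r zm ≤ r y := hzm (by
      rw [mem_closedBall, dist_eq_norm]
      calc ‖y - p‖ ≤ 1 := hy
        _ ≤ 1 + ‖v‖ := by linarith [norm_nonneg v])
    show (φ (y + t • v) - φ y) / t ≤ Cb
    rw [div_le_iff₀ ht0]
    have hfg : f (y + t • v) - f y ≤ t * ⟪gradient f (y + t • v), v⟫ + (ρ:ℝ)/2 * (t^2*‖v‖^2) := by
      rw [mul_pow] at hdes; nlinarith [hdes]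
    have h1 : t * ⟪gradient f (y + t • v), v⟫ ≤ t * C1 :=
      mul_le_mul_of_nonneg_left hinner ht0.le
    have ht2 : t^2 ≤ t := by nlinarith
    have h2 : (ρ:ℝ)/2 * (t^2*‖v‖^2) ≤ t * ((ρ:ℝ)/2*‖v‖^2) := by
      have hh := mul_le_mul_of_nonneg_left ht2 (show (0:ℝ) ≤ (ρ:ℝ)/2*‖v‖^2 by positivity)
      nlinarith [hh]
    have hrg : r (y + t • v) - r y ≤ t * (r zM - r zm) := by nlinarith
    have hφexp : φ (y + t • v) - φ y = (f (y + t • v) - f y) + (r (y + t • v) - r y) := by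
      simp only [hφ]; ring
    rw [hφexp, hCb]
    nlinarith [hfg, h1, h2, hrg]
  -- conclude via limsup
  show ⟪g, v⟫ ≤ clarkeDeriv φ p v
  have key : ∀ a, a < ⟪g, v⟫ → a ≤ clarkeDeriv φ p v := by
    intro a ha
    have hden : (0:ℝ) < κ*‖v‖^2 + 1 := by nlinarith [sq_nonneg ‖v‖, hκ0]
    have hη : 0 < (⟪g, v⟫ - a)/(κ*‖v‖^2 + 1) := div_pos (by linarith) hden
    set η := (⟪g, v⟫ - a)/(κ*‖v‖^2 + 1) with hηdef
    have hev : ∀ᶠ t in 𝓝[>] (0:ℝ), a ≤ u (p, t) := by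
      filter_upwards [Ioc_mem_nhdsGT hη]
      rintro t ⟨ht0, htη⟩
      have hq := hquot t ht0
      have hκtv : κ*t*‖v‖^2 ≤ η*(κ*‖v‖^2 + 1) := by
        nlinarith [sq_nonneg ‖v‖, hκ0, ht0, hη]
      have hηeq : η*(κ*‖v‖^2 + 1) = ⟪g, v⟫ - a := by
        rw [hηdef]; field_simp
      linarith
    have hsf : ∀ᶠ z in ((pure p : Filter E) ×ˢ 𝓝[>] (0:ℝ)), a ≤ u z := by
      have hmem := prod_mem_prod (show {p} ∈ (pure p : Filter E) from rfl) hev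
      apply mem_of_superset hmem
      rintro ⟨y, t⟩ ⟨hy, ht⟩
      rw [Set.mem_singleton_iff] at hy
      subst hy
      exact ht
    have hfreq : ∃ᶠ z in F, a ≤ u z :=
      hsf.frequently.filter_mono (Filter.prod_mono (pure_le_nhds p) le_rfl)
    exact le_limsup_of_frequently_le hfreq hbdd
  by_contra hcon
  push_neg at hcon
  have := key ((clarkeDeriv φ p v + ⟪g, v⟫)/2) (by linarith)
  linarith

set_option maxHeartbeats 1000000 in
/-- Surrogate Moreau-envelope stationarity implies Goldstein stationarity: if
`‖∇e_λφ_μ(x*)‖ ≤ ε` with `λ < ρ⁻¹`, then `x*` is a `(λε, ε)`-Goldstein stationary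
point of `φ_μ = f_μ + r`. -/
theorem moreau_implies_goldstein (ρ : ℝ≥0) (hρ : 0 < ρ)
    (fμ : EuclideanSpace ℝ (Fin n) → ℝ) (hfμ : Differentiable ℝ fμ)
    (hgrad : LipschitzWith ρ (gradient fμ))
    (r : EuclideanSpace ℝ (Fin n) → ℝ) (hr : ConvexOn ℝ Set.univ r)
    (hrlsc : LowerSemicontinuous r)
    (lam : ℝ) (hlam : lam ∈ Set.Ioo 0 (ρ : ℝ)⁻¹) (ε : ℝ) (hε : 0 < ε)
    (xstar : EuclideanSpace ℝ (Fin n))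
    (hsmall : ‖gradient (moreauEnv (fun y => fμ y + r y) lam) xstar‖ ≤ ε) :
    ∃ g ∈ goldsteinSubdiff (lam * ε) (fun y => fμ y + r y) xstar, ‖g‖ ≤ ε := by
  obtain ⟨hlam0, hlam1⟩ := hlam
  have hρR : (0:ℝ) < ρ := hρ
  have hρlam : (ρ:ℝ) * lam < 1 := by
    have := mul_lt_mul_of_pos_left hlam1 hρR
    rwa [mul_inv_cancel₀ hρR.ne'] at this
  set φ : E → ℝ := fun y => fμ y + r y with hφ
  set κ : ℝ := 1/(2*lam) with hκdef
  have hκ0 : 0 < κ := by rw [hκdef]; positivity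
  have hκ : (ρ:ℝ)/2 < κ := by
    rw [hκdef, lt_div_iff₀ (by positivity)]
    nlinarith
  set γ : ℝ := (2*κ - ρ)/4 with hγdef
  have hγ0 : 0 < γ := by rw [hγdef]; linarith
  set Kl : ℝ := κ/γ with hKl
  have hKl0 : 0 ≤ Kl := by positivity
  set Cq : ℝ := κ + 2*κ*(Kl + 1) with hCq
  have hCq0 : 0 ≤ Cq := by positivity
  -- prox points
  have hex : ∀ y : E, ∃ p, ∀ w, fμ p + r p + κ * ‖p - y‖^2 ≤ fμ w + r w + κ * ‖w - y‖^2 :=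
    fun y => prox_exists hfμ hgrad hr hκ y
  set P : E → E := fun y => Classical.choose (hex y) with hPdef
  have hP : ∀ y w, fμ (P y) + r (P y) + κ * ‖P y - y‖^2
      ≤ fμ w + r w + κ * ‖w - y‖^2 := fun y => Classical.choose_spec (hex y)
  -- envelope value
  have hbddb : ∀ y : E, BddBelow (Set.range fun w => φ w + κ*‖w - y‖^2) := by
    intro y
    refine ⟨φ (P y) + κ*‖P y - y‖^2, ?_⟩
    rintro _ ⟨w, rfl⟩
    exact hP y w
  have hκeq : ∀ y : E, moreauEnv φ lam y = ⨅ w, (φ w + κ * ‖w - y‖^2) := by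
    intro y; rw [moreauEnv, hκdef]
  have henv_le : ∀ y w : E, moreauEnv φ lam y ≤ φ w + κ*‖w - y‖^2 := by
    intro y w; rw [hκeq]; exact ciInf_le (hbddb y) w
  have henv_eq : ∀ y : E, moreauEnv φ lam y = φ (P y) + κ*‖P y - y‖^2 := by
    intro y
    refine le_antisymm (henv_le y (P y)) ?_
    rw [hκeq]
    exact le_ciInf (fun w => hP y w)
  set x : E := xstar with hx
  set p : E := P xstar with hpdef
  set g : E := (2*κ) • (x - p) with hgdef
  -- quadratic expansion bound
  have hgv : ∀ z : E, ⟪g, z⟫ = -(2*κ*⟪p - x, z⟫) := by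
    intro z
    rw [hgdef, real_inner_smul_left, show x - p = -(p - x) by abel, inner_neg_left]
    ring
  have key : ∀ y : E, |moreauEnv φ lam y - moreauEnv φ lam x - ⟪g, y - x⟫|
      ≤ Cq * ‖y - x‖^2 := by
    intro y
    set q : E := P y with hq
    have hub : moreauEnv φ lam y - moreauEnv φ lam x ≤ ⟪g, y - x⟫ + κ*‖y - x‖^2 := by
      have h1 := henv_le y p
      have h2 := henv_eq x
      have hnorm : ‖p - y‖^2 = ‖p - x‖^2 - 2*⟪p - x, y - x⟫ + ‖y - x‖^2 := by
        rw [show p - y = (p - x) - (y - x) by abel, norm_sub_sq_real]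
      rw [hgv (y - x)]
      nlinarith [h1, h2, hnorm]
    have hlb : -(⟪g, y - x⟫) + (moreauEnv φ lam y - moreauEnv φ lam x)
        ≥ -(Cq * ‖y - x‖^2) := by
      have h1 := henv_le x q
      have h2 := henv_eq y
      have hnorm2 : ‖q - x‖^2 = ‖q - y‖^2 + 2*⟪q - y, y - x⟫ + ‖y - x‖^2 := by
        rw [show q - x = (q - y) + (y - x) by abel, norm_add_sq_real]
      -- so env x - env y ≤ 2κ⟪q-y,y-x⟫ + κ‖y-x‖²
      have h3 : moreauEnv φ lam x - moreauEnv φ lam y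
          ≤ 2*κ*⟪q - y, y - x⟫ + κ*‖y - x‖^2 := by nlinarith [h1, h2, hnorm2]
      have hlip := prox_lip hfμ hgrad hr hκ x y p q (hP x) (hP y)
      have hdq : ‖q - p‖ ≤ Kl * ‖y - x‖ := by
        rw [hKl, div_mul_eq_mul_div, le_div_iff₀ hγ0]
        calc ‖q - p‖ * γ = γ * ‖q - p‖ := by ring
          _ ≤ κ * ‖y - x‖ := by
              rw [hγdef]
              exact hlip
          _ = κ * ‖y - x‖ := rfl
      have hs1 : ⟪(q - y) + (x - p), y - x⟫ ≤ (‖q - p‖ + ‖y - x‖)*‖y - x‖ := by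
        calc ⟪(q - y) + (x - p), y - x⟫ ≤ ‖(q - y) + (x - p)‖*‖y - x‖ := real_inner_le_norm _ _
          _ ≤ (‖q - p‖ + ‖y - x‖)*‖y - x‖ := by
              apply mul_le_mul_of_nonneg_right _ (norm_nonneg _)
              rw [show (q - y) + (x - p) = (q - p) - (y - x) by abel]
              exact norm_sub_le _ _
      have hinsum : ⟪(q - y) + (x - p), y - x⟫ = ⟪q - y, y - x⟫ + ⟪x - p, y - x⟫ :=
        inner_add_left _ _ _
      have hgv2 : ⟪g, y - x⟫ = 2*κ*⟪x - p, y - x⟫ := by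
        rw [hgdef, real_inner_smul_left]
      -- combine
      have hD0 : (0:ℝ) ≤ ‖y - x‖ := norm_nonneg _
      have hdq' : ‖q - p‖ * ‖y - x‖ ≤ Kl * ‖y - x‖ * ‖y - x‖ :=
        mul_le_mul_of_nonneg_right hdq hD0
      rw [hgv2]
      nlinarith [h3, hs1, hinsum, hdq', mul_le_mul_of_nonneg_left
        (add_le_add hdq' (le_refl (‖y - x‖*‖y - x‖))) (by positivity : (0:ℝ) ≤ 2*κ)]
    rw [abs_le]
    constructor
    · nlinarith [hlb]
    · nlinarith [hub, mul_le_mul_of_nonneg_right (show κ ≤ Cq by nlinarith) (sq_nonneg ‖y - x‖)]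
  -- differentiability of the envelope at x
  have hfd : HasFDerivAt (moreauEnv φ lam) (InnerProductSpace.toDual ℝ E g) x := by
    rw [hasFDerivAt_iff_isLittleO_nhds_zero]
    rw [Asymptotics.isLittleO_iff]
    intro c hc
    filter_upwards [closedBall_mem_nhds (0:E) (show (0:ℝ) < c/(Cq+1) by positivity)]
    intro h hh
    rw [mem_closedBall, dist_zero_right] at hh
    have hk := key (x + h)
    rw [show x + h - x = h by abel] at hk
    rw [InnerProductSpace.toDual_apply_apply]
    rw [Real.norm_eq_abs]
    have h2 : Cq * (c/(Cq+1)) ≤ c := by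
      rw [mul_div_assoc']
      rw [div_le_iff₀ (by positivity : (0:ℝ) < Cq + 1)]
      nlinarith
    have h3 : Cq*‖h‖ ≤ c := le_trans (mul_le_mul_of_nonneg_left hh hCq0) h2
    nlinarith [hk, h3, norm_nonneg h]
  -- gradient identification
  have hga : HasGradientAt (moreauEnv φ lam) g x := by
    have h1 := hfd.hasGradientAt
    rwa [(InnerProductSpace.toDual ℝ E).symm_apply_apply] at h1
  have hgrad_eq : gradient (moreauEnv φ lam) x = g :=
    (hga.differentiableAt.hasGradientAt).unique hga
  rw [hgrad_eq] at hsmall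
  have hgnorm : ‖g‖ = (1/lam)*‖x - p‖ := by
    rw [hgdef, norm_smul, Real.norm_eq_abs, abs_of_pos (by positivity : (0:ℝ) < 2*κ)]
    congr 1
    rw [hκdef]; field_simp
  have hxp : ‖x - p‖ ≤ lam * ε := by
    have h1 : (1/lam)*‖x - p‖ ≤ ε := by rw [← hgnorm]; exact hsmall
    have := mul_le_mul_of_nonneg_left h1 hlam0.le
    calc ‖x - p‖ = lam * ((1/lam)*‖x - p‖) := by field_simp
      _ ≤ lam * ε := this
  have hpball : p ∈ closedBall xstar (lam * ε) := by
    rw [mem_closedBall, dist_eq_norm]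
    calc ‖p - xstar‖ = ‖x - p‖ := by rw [hx, norm_sub_rev]
      _ ≤ lam * ε := hxp
  have hclarke : g ∈ clarkeSubdiff (fun y => fμ y + r y) p :=
    mem_clarke hfμ hgrad hr hκ0 x p (hP xstar) hgdef
  refine ⟨g, ?_, hgnorm ▸ hsmall⟩
  exact subset_convexHull ℝ _ (Set.mem_biUnion hpball hclarke)
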